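/- Any global optimal solution p* of min_{p ∈ Ω_{k,p⁰,δ}} Q(p) is a first-order stationary point: p* belongs to the projection of p* - (1/L)∇Q(p*) onto Ω_{k,p⁰,δ}, for any L > λ₁. -/

import Mathlib

open Matrix

lemma symm_dot {n : ℕ} (S : Matrix (Fin n) (Fin n) ℝ) (hH : S.IsHermitian)
    (x y : Fin n → ℝ) : x ⬝ᵥ S.mulVec y = y ⬝ᵥ S.mulVec x := by
  have ht : Sᵀ = S := by rw [← Matrix.conjTranspose_eq_transpose_of_trivial]; exact hH.eq
  rw [dotProduct_mulVec, ← mulVec_transpose, ht, dotProduct_comm]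

lemma quad_bound {n : ℕ} (S : Matrix (Fin n) (Fin n) ℝ) (hH : S.IsHermitian)
    (lam1 : ℝ) (hlam : ∀ i, hH.eigenvalues i ≤ lam1) (x : Fin n → ℝ) :
    x ⬝ᵥ S.mulVec x ≤ lam1 * (x ⬝ᵥ x) := by
  set U : Matrix (Fin n) (Fin n) ℝ := (hH.eigenvectorUnitary : Matrix (Fin n) (Fin n) ℝ) with hU
  set v : Fin n → ℝ := star U *ᵥ x with hv
  have hxU : ∀ w : Fin n → ℝ, x ⬝ᵥ U *ᵥ w = v ⬝ᵥ w := by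
    intro w
    rw [dotProduct_mulVec, hv, ← mulVec_transpose, ← Matrix.conjTranspose_eq_transpose_of_trivial]
    rfl
  have h1 : x ⬝ᵥ S.mulVec x = ∑ i, hH.eigenvalues i * (v i)^2 := by
    conv_lhs => rw [hH.spectral_theorem, Unitary.conjStarAlgAut_apply]
    rw [← mulVec_mulVec, ← mulVec_mulVec, hxU]
    simp [mulVec_diagonal, dotProduct, mul_comm, sq, mul_assoc]
    exact Finset.sum_congr rfl fun i _ => by ring
  have h2 : x ⬝ᵥ x = ∑ i, (v i)^2 := by
    have : v ⬝ᵥ v = x ⬝ᵥ x := by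
      have hUU : U * Uᴴ = 1 := by
        simpa [hU, Matrix.star_eq_conjTranspose] using
          Unitary.coe_mul_star_self hH.eigenvectorUnitary
      rw [hv, dotProduct_mulVec, ← mulVec_transpose, ← Matrix.conjTranspose_eq_transpose_of_trivial,
        Matrix.star_eq_conjTranspose, conjTranspose_conjTranspose, mulVec_mulVec, hUU, one_mulVec]
    rw [← this]
    simp [dotProduct, sq]
  rw [h1, h2, Finset.mul_sum]
  apply Finset.sum_le_sum
  intro i _
  exact mul_le_mul_of_nonneg_right (hlam i) (sq_nonneg _)

theorem global_optimum_is_stationary {n k : ℕ}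
    (S : Matrix (Fin n) (Fin n) ℝ) (f p0 δ : Fin n → ℝ) (hPD : S.PosDef)
    (hδ : ∀ i, 0 < δ i)
    (Q : (Fin n → ℝ) → ℝ)
    (hQ : ∀ p, Q p = (1/2) * (p ⬝ᵥ S.mulVec p) - f ⬝ᵥ p)
    (lam1 : ℝ) (hlam1 : IsGreatest (Set.range hPD.1.eigenvalues) lam1)
    (Ω : Set (Fin n → ℝ))
    (hΩ : Ω = {p | {i | p i ≠ p0 i}.ncard ≤ k ∧
      ∀ i, p i = p0 i ∨ p0 i + δ i ≤ p i ∨ p i ≤ p0 i - δ i})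
    (pstar : Fin n → ℝ) (hfeas : pstar ∈ Ω) (hopt : ∀ p ∈ Ω, Q pstar ≤ Q p)
    (L : ℝ) (hL : lam1 < L) :
    ∀ p'' ∈ Ω,
      ∑ i, (pstar i - (pstar i - (1/L) * (S.mulVec pstar - f) i)) ^ 2 ≤
        ∑ i, (p'' i - (pstar i - (1/L) * (S.mulVec pstar - f) i)) ^ 2 := by
  intro p'' hp''
  have hL0 : 0 < L := by
    obtain ⟨i, hi⟩ := hlam1.1
    have := hPD.eigenvalues_pos i
    rw [hi] at this
    linarith
  set g : Fin n → ℝ := S.mulVec pstar - f with hg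
  set d : Fin n → ℝ := p'' - pstar with hd
  have hp''eq : p'' = pstar + d := by simp [hd]
  -- optimality inequality
  have hQineq := hopt p'' hp''
  rw [hQ, hQ, hp''eq] at hQineq
  have hexp : (pstar + d) ⬝ᵥ S.mulVec (pstar + d)
      = pstar ⬝ᵥ S.mulVec pstar + 2 * (d ⬝ᵥ S.mulVec pstar) + d ⬝ᵥ S.mulVec d := by
    rw [mulVec_add, dotProduct_add, add_dotProduct, add_dotProduct,
      symm_dot S hPD.1 pstar d]
    ring
  have hfexp : f ⬝ᵥ (pstar + d) = f ⬝ᵥ pstar + f ⬝ᵥ d := dotProduct_add f pstar d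
  have key : 0 ≤ g ⬝ᵥ d + (1/2) * (d ⬝ᵥ S.mulVec d) := by
    have hgd : g ⬝ᵥ d = d ⬝ᵥ S.mulVec pstar - f ⬝ᵥ d := by
      rw [hg, sub_dotProduct, dotProduct_comm (S.mulVec pstar) d]
    rw [hexp, hfexp] at hQineq
    rw [hgd]
    linarith
  have hdd : 0 ≤ d ⬝ᵥ d := by
    simp only [dotProduct]
    exact Finset.sum_nonneg fun i _ => mul_self_nonneg _
  have hquad : d ⬝ᵥ S.mulVec d ≤ L * (d ⬝ᵥ d) := by
    calc d ⬝ᵥ S.mulVec d ≤ lam1 * (d ⬝ᵥ d) :=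
          quad_bound S hPD.1 lam1 (fun i => hlam1.2 ⟨i, rfl⟩) d
      _ ≤ L * (d ⬝ᵥ d) := mul_le_mul_of_nonneg_right hL.le hdd
  -- rewrite the goal
  rw [← sub_nonneg, ← Finset.sum_sub_distrib]
  have hterm : ∀ i ∈ Finset.univ, (p'' i - (pstar i - (1/L) * g i)) ^ 2
      - (pstar i - (pstar i - (1/L) * g i)) ^ 2 = d i * d i + (2/L) * (g i * d i) := by
    intro i _
    have : d i = p'' i - pstar i := rfl
    rw [this]
    field_simp
    ring
  rw [Finset.sum_congr rfl hterm, Finset.sum_add_distrib, ← Finset.mul_sum]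
  have h1 : ∑ i, d i * d i = d ⬝ᵥ d := rfl
  have h2 : ∑ i, g i * d i = g ⬝ᵥ d := rfl
  rw [h1, h2]
  have : -(L/2) * (d ⬝ᵥ d) ≤ g ⬝ᵥ d := by nlinarith [key, hquad]
  have h5 := mul_le_mul_of_nonneg_left this (by positivity : (0:ℝ) ≤ 2/L)
  have h6 : 2/L * (-(L/2) * (d ⬝ᵥ d)) = -(d ⬝ᵥ d) := by field_simp
  linarith
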